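/- Suppose m = 1 (a single anomalous node), that D(f_ℓ‖g_ℓ) and D(g_ℓ‖f_ℓ) are finite for every ℓ, and that ∫_{ℝ^L} p_E(x) |log(p̄_α(x)/g(x))| dx < ∞ for every E ∈ ℰ and α ∈ 𝒜. Then the minimizer α* of I_α over 𝒜 is an interior point of the simplex: every entry of α* is strictly positive, i.e., ‖α*‖₀ = |ℰ| = L. -/

import Mathlib

open MeasureTheory ProbabilityTheory Filter Finset
open scoped ENNReal NNReal Classical

namespace MovingAnomaly

/-- The observation space of the sensor network: one real observation per sensor. -/
abbrev Obs (L : ℕ) := Fin L → ℝ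

/-- The sample space: an infinite sequence of vector observations.
Coordinate `n : ℕ` carries the observation `X[n+1]` at time `n+1`. -/
abbrev Traj (L : ℕ) := ℕ → Obs L

/-- The collection ℰ of all size-`m` subsets of the `L` sensors. -/
abbrev ESet (L m : ℕ) := {E : Finset (Fin L) // E.card = m}

/-- Membership in the probability simplex 𝒜 over ℰ. -/
def MemSimplex (L m : ℕ) (α : ESet L m → ℝ) : Prop :=
  (∀ E, 0 ≤ α E) ∧ ∑ E : ESet L m, α E = 1

/-- `d` is a strictly positive probability density on ℝ (w.r.t. Lebesgue measure). -/
structure IsPosDensity (d : ℝ → ℝ) : Prop where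
  meas : Measurable d
  pos : ∀ t, 0 < d t
  int_one : ∫ t, d t = 1

/-- Joint non-anomalous density `g(x) = ∏ g_ℓ(x_ℓ)`. -/
def gdens {L : ℕ} (g : Fin L → ℝ → ℝ) (x : Obs L) : ℝ := ∏ ℓ, g ℓ (x ℓ)

/-- Joint density `p_E(x)` when the anomalous sensors are those of `E`. -/
def pdens {L : ℕ} (f g : Fin L → ℝ → ℝ) (E : Finset (Fin L)) (x : Obs L) : ℝ :=
  ∏ ℓ, if ℓ ∈ E then f ℓ (x ℓ) else g ℓ (x ℓ)

/-- The mixture density `p̄_α(x) = ∑_E α_E p_E(x)`. -/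
def pbar {L m : ℕ} (f g : Fin L → ℝ → ℝ) (α : ESet L m → ℝ) (x : Obs L) : ℝ :=
  ∑ E : ESet L m, α E * pdens f g E.1 x

/-- The measure on ℝ with density `d` w.r.t. Lebesgue measure. -/
noncomputable def densMeasure (d : ℝ → ℝ) : Measure ℝ :=
  volume.withDensity fun t => ENNReal.ofReal (d t)

/-- The product measure on `ℝ^L` whose `ℓ`-th marginal has density `d ℓ`. -/
noncomputable def jointMeasure {L : ℕ} (d : Fin L → ℝ → ℝ) : Measure (Obs L) :=
  Measure.pi fun ℓ => densMeasure (d ℓ)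

/-- The measure with joint density `p_E`. -/
noncomputable def pMeasure {L : ℕ} (f g : Fin L → ℝ → ℝ) (E : Finset (Fin L)) :
    Measure (Obs L) :=
  jointMeasure fun ℓ => if ℓ ∈ E then f ℓ else g ℓ

/-- The mixture measure with density `p̄_α`. -/
noncomputable def mixMeasure {L m : ℕ} (f g : Fin L → ℝ → ℝ) (α : ESet L m → ℝ) :
    Measure (Obs L) :=
  ∑ E : ESet L m, ENNReal.ofReal (α E) • pMeasure f g E.1

/-- `P` is the infinite product measure on the sequence space under which the coordinates
are independent and coordinate `n` has law `μ n`. -/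
def IsProductLaw {L : ℕ} (P : Measure (Traj L)) (μ : ℕ → Measure (Obs L)) : Prop :=
  IsProbabilityMeasure P ∧
    iIndepFun (fun n (ω : Traj L) => ω n) P ∧
    ∀ n, P.map (fun ω => ω n) = μ n

/-- The natural filtration: `Fil L k = σ(X[1],…,X[k])`. -/
def Fil (L : ℕ) (k : ℕ) : MeasurableSpace (Traj L) :=
  MeasurableSpace.comap (fun (ω : Traj L) (i : Fin k) => ω i) inferInstance

/-- A stopping time of the natural filtration (valued in ℕ ∪ {∞}, time 0 excluded
by requiring values ≥ 1 where needed). -/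
def IsStopping {L : ℕ} (τ : Traj L → ℕ∞) : Prop :=
  ∀ k : ℕ, MeasurableSet[Fil L k] {ω | τ ω ≤ (k : ℕ∞)}

/-- The quantity `esssup_{τ>ν} E_P[τ - ν | F_ν]`, with the convention that it equals `1`
when `P(τ > ν) = 0`. -/
noncomputable def condDelay {L : ℕ} (P : Measure (Traj L)) (ν : ℕ) (τ : Traj L → ℕ∞) :
    ℝ≥0∞ :=
  if hP : IsFiniteMeasure P then
    haveI := hP
    if P {ω | (ν : ℕ∞) < τ ω} = 0 then 1
    else
      essSup
        (fun ω => ∫⁻ ω', ((τ ω' - (ν : ℕ∞) : ℕ∞) : ℝ≥0∞) ∂(condExpKernel P (Fil L ν) ω))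
        (P.restrict {ω | (ν : ℕ∞) < τ ω})
  else 1

/-- Lorden-type worst-path delay `WADD(τ)`, given the family of measures `PS S ν = P_ν^S`. -/
noncomputable def wadd {L m : ℕ} (PS : (ℕ → ESet L m) → ℕ → Measure (Traj L))
    (τ : Traj L → ℕ∞) : ℝ≥0∞ :=
  ⨆ (S : ℕ → ESet L m) (ν : ℕ), condDelay (PS S ν) ν τ

/-- The delay `\overline{WADD}_α(τ)` for the randomized-anomaly model, given the family
`Pb ν = P̄_ν^α`. -/
noncomputable def waddBar {L : ℕ} (Pb : ℕ → Measure (Traj L)) (τ : Traj L → ℕ∞) : ℝ≥0∞ :=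
  ⨆ ν : ℕ, condDelay (Pb ν) ν τ

/-- Mean time to false alarm `E_∞[τ]` (as an extended nonnegative real). -/
noncomputable def mtfa {L : ℕ} (Pinf : Measure (Traj L)) (τ : Traj L → ℕ∞) : ℝ≥0∞ :=
  ∫⁻ ω, ((τ ω : ℕ∞) : ℝ≥0∞) ∂Pinf

/-- The class `C_γ` of stopping times with mean time to false alarm at least `γ`. -/
def Cgamma {L : ℕ} (Pinf : Measure (Traj L)) (γ : ℝ) (τ : Traj L → ℕ∞) : Prop :=
  IsStopping τ ∧ ENNReal.ofReal γ ≤ mtfa Pinf τ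

/-- The CUSUM statistic driven by the likelihood ratio `lr`:
`W[0] = 0`, `W[k] = max(W[k-1],1) * lr(X[k])`. -/
noncomputable def cusumStat {L : ℕ} (lr : Obs L → ℝ) (ω : Traj L) : ℕ → ℝ
  | 0 => 0
  | k + 1 => max (cusumStat lr ω k) 1 * lr (ω k)

/-- The instantaneous likelihood ratio `p̄_λ(x)/g(x)` of the M-CUSUM test. -/
noncomputable def mlr {L m : ℕ} (f g : Fin L → ℝ → ℝ) (lam : ESet L m → ℝ) (x : Obs L) : ℝ :=
  pbar f g lam x / gdens g x

/-- The M-CUSUM stopping time `τ_W(λ, b) = inf {k ≥ 1 : W_λ[k] ≥ e^b}` (∞ if no such k). -/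
noncomputable def mcusumTime {L m : ℕ} (f g : Fin L → ℝ → ℝ) (lam : ESet L m → ℝ) (b : ℝ)
    (ω : Traj L) : ℕ∞ :=
  sInf {t : ℕ∞ | ∃ k : ℕ, t = (k : ℕ∞) ∧ 1 ≤ k ∧ Real.exp b ≤ cusumStat (mlr f g lam) ω k}

/-- The Kullback–Leibler number `I_α = ∫ p̄_α log(p̄_α/g)`. -/
noncomputable def KLnum {L m : ℕ} (f g : Fin L → ℝ → ℝ) (α : ESet L m → ℝ) : ℝ :=
  ∫ x : Obs L, pbar f g α x * Real.log (pbar f g α x / gdens g x)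

/-- Joint density with the single anomaly at node `ℓ` (case `m = 1`):
`p_ℓ(x) = f_ℓ(x_ℓ) ∏_{r ≠ ℓ} g_r(x_r)`. -/
def pdens1 {L : ℕ} (f g : Fin L → ℝ → ℝ) (ℓ : Fin L) (x : Obs L) : ℝ :=
  ∏ r, if r = ℓ then f r (x r) else g r (x r)

/-- The mixture `p̄_α(x) = ∑_ℓ α_ℓ p_ℓ(x)` (case `m = 1`, `ℰ` identified with `{1,…,L}`). -/
def pbar1 {L : ℕ} (f g : Fin L → ℝ → ℝ) (α : Fin L → ℝ) (x : Obs L) : ℝ :=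
  ∑ ℓ, α ℓ * pdens1 f g ℓ x

/-- The KL number `I_α = ∫ p̄_α log(p̄_α/g)` (case `m = 1`). -/
noncomputable def KLnum1 {L : ℕ} (f g : Fin L → ℝ → ℝ) (α : Fin L → ℝ) : ℝ :=
  ∫ x : Obs L, pbar1 f g α x * Real.log (pbar1 f g α x / gdens g x)

section Aux

variable {L : ℕ} {f g : Fin L → ℝ → ℝ}

lemma IsPosDensity.integrable {d : ℝ → ℝ} (hd : IsPosDensity d) : Integrable d := by
  by_contra h
  have h1 := hd.int_one
  rw [integral_undef h] at h1
  exact one_ne_zero h1.symm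

lemma IsPosDensity.lintegral_eq_one {d : ℝ → ℝ} (hd : IsPosDensity d) :
    ∫⁻ t, ENNReal.ofReal (d t) = 1 := by
  rw [← ofReal_integral_eq_lintegral_ofReal hd.integrable
      (Filter.Eventually.of_forall fun t => (hd.pos t).le),
    hd.int_one, ENNReal.ofReal_one]

/-- The ratio function `R_α(x) = ∑ ℓ, α ℓ * f ℓ (x ℓ) / g ℓ (x ℓ)`. -/
noncomputable def Rfun (f g : Fin L → ℝ → ℝ) (α : Fin L → ℝ) (x : Obs L) : ℝ :=
  ∑ ℓ, α ℓ * (f ℓ (x ℓ) / g ℓ (x ℓ))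

lemma measurable_gdens (hg : ∀ ℓ, IsPosDensity (g ℓ)) : Measurable (gdens g) :=
  Finset.measurable_prod _ fun ℓ _ => (hg ℓ).meas.comp (measurable_pi_apply ℓ)

lemma measurable_pdens1 (hf : ∀ ℓ, IsPosDensity (f ℓ)) (hg : ∀ ℓ, IsPosDensity (g ℓ))
    (ℓ : Fin L) : Measurable (pdens1 f g ℓ) :=
  Finset.measurable_prod _ fun r _ => by
    by_cases h : r = ℓ
    · simp only [if_pos h]; exact (hf r).meas.comp (measurable_pi_apply r)
    · simp only [if_neg h]; exact (hg r).meas.comp (measurable_pi_apply r)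

lemma measurable_pbar1 (hf : ∀ ℓ, IsPosDensity (f ℓ)) (hg : ∀ ℓ, IsPosDensity (g ℓ))
    (α : Fin L → ℝ) : Measurable (pbar1 f g α) :=
  Finset.measurable_sum _ fun ℓ _ => (measurable_pdens1 hf hg ℓ).const_mul (α ℓ)

lemma measurable_Rfun (hf : ∀ ℓ, IsPosDensity (f ℓ)) (hg : ∀ ℓ, IsPosDensity (g ℓ))
    (α : Fin L → ℝ) : Measurable (Rfun f g α) :=
  Finset.measurable_sum _ fun ℓ _ =>
    (((hf ℓ).meas.comp (measurable_pi_apply ℓ)).div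
      ((hg ℓ).meas.comp (measurable_pi_apply ℓ))).const_mul (α ℓ)

lemma gdens_pos (hg : ∀ ℓ, IsPosDensity (g ℓ)) (x : Obs L) : 0 < gdens g x :=
  Finset.prod_pos fun ℓ _ => (hg ℓ).pos _

lemma pdens1_pos (hf : ∀ ℓ, IsPosDensity (f ℓ)) (hg : ∀ ℓ, IsPosDensity (g ℓ))
    (ℓ : Fin L) (x : Obs L) : 0 < pdens1 f g ℓ x :=
  Finset.prod_pos fun r _ => by
    by_cases h : r = ℓ
    · simpa only [if_pos h] using (hf r).pos (x r)
    · simpa only [if_neg h] using (hg r).pos (x r)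

lemma gdens_eq_mul_erase (ℓ : Fin L) (x : Obs L) :
    gdens g x = g ℓ (x ℓ) * ∏ r ∈ Finset.univ.erase ℓ, g r (x r) :=
  (Finset.mul_prod_erase Finset.univ _ (Finset.mem_univ ℓ)).symm

lemma pdens1_eq_mul_erase (ℓ : Fin L) (x : Obs L) :
    pdens1 f g ℓ x = f ℓ (x ℓ) * ∏ r ∈ Finset.univ.erase ℓ, g r (x r) := by
  rw [pdens1, ← Finset.mul_prod_erase Finset.univ _ (Finset.mem_univ ℓ), if_pos rfl]
  congr 1
  exact Finset.prod_congr rfl fun r hr => if_neg (Finset.ne_of_mem_erase hr)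

lemma pdens1_eq (hg : ∀ ℓ, IsPosDensity (g ℓ)) (ℓ : Fin L) (x : Obs L) :
    pdens1 f g ℓ x = f ℓ (x ℓ) / g ℓ (x ℓ) * gdens g x := by
  rw [pdens1_eq_mul_erase, gdens_eq_mul_erase ℓ x]
  field_simp [((hg ℓ).pos (x ℓ)).ne']

lemma pbar1_eq (hg : ∀ ℓ, IsPosDensity (g ℓ)) (α : Fin L → ℝ) (x : Obs L) :
    pbar1 f g α x = Rfun f g α x * gdens g x := by
  rw [pbar1, Rfun, Finset.sum_mul]
  exact Finset.sum_congr rfl fun ℓ _ => by rw [pdens1_eq hg ℓ x, mul_assoc]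

lemma pbar1_div (hg : ∀ ℓ, IsPosDensity (g ℓ)) (α : Fin L → ℝ) (x : Obs L) :
    pbar1 f g α x / gdens g x = Rfun f g α x := by
  rw [pbar1_eq hg, mul_div_assoc, div_self (gdens_pos hg x).ne', mul_one]

lemma exists_pos {α : Fin L → ℝ} (hnn : ∀ r, 0 ≤ α r) (hsum : ∑ r, α r = 1) :
    ∃ ℓ, 0 < α ℓ := by
  by_contra h
  push_neg at h
  have : ∑ r, α r ≤ 0 := Finset.sum_nonpos fun r _ => h r
  linarith

lemma Rfun_pos (hf : ∀ ℓ, IsPosDensity (f ℓ)) (hg : ∀ ℓ, IsPosDensity (g ℓ))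
    {α : Fin L → ℝ} (hnn : ∀ r, 0 ≤ α r) (hsum : ∑ r, α r = 1) (x : Obs L) :
    0 < Rfun f g α x := by
  obtain ⟨ℓ₁, h1⟩ := exists_pos hnn hsum
  exact Finset.sum_pos'
    (fun ℓ _ => mul_nonneg (hnn ℓ) (div_pos ((hf ℓ).pos _) ((hg ℓ).pos _)).le)
    ⟨ℓ₁, Finset.mem_univ _, mul_pos h1 (div_pos ((hf ℓ₁).pos _) ((hg ℓ₁).pos _))⟩

lemma pbar1_pos (hf : ∀ ℓ, IsPosDensity (f ℓ)) (hg : ∀ ℓ, IsPosDensity (g ℓ))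
    {α : Fin L → ℝ} (hnn : ∀ r, 0 ≤ α r) (hsum : ∑ r, α r = 1) (x : Obs L) :
    0 < pbar1 f g α x := by
  rw [pbar1_eq hg]
  exact mul_pos (Rfun_pos hf hg hnn hsum x) (gdens_pos hg x)

lemma pdens1_eq_prod (ℓ : Fin L) :
    pdens1 f g ℓ = fun x => ∏ r, (if r = ℓ then f r else g r) (x r) := by
  funext x
  exact Finset.prod_congr rfl fun r _ => by by_cases h : r = ℓ <;> simp [h]

lemma integrable_pdens1 (hf : ∀ ℓ, IsPosDensity (f ℓ)) (hg : ∀ ℓ, IsPosDensity (g ℓ))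
    (ℓ : Fin L) : Integrable (pdens1 f g ℓ) := by
  rw [pdens1_eq_prod]
  exact Integrable.fintype_prod fun r => by
    by_cases h : r = ℓ
    · subst h; simpa using (hf r).integrable
    · simpa [h] using (hg r).integrable

lemma integral_pdens1 (hf : ∀ ℓ, IsPosDensity (f ℓ)) (hg : ∀ ℓ, IsPosDensity (g ℓ))
    (ℓ : Fin L) : ∫ x, pdens1 f g ℓ x = 1 := by
  simp only [pdens1_eq_prod]
  rw [MeasureTheory.volume_pi, MeasureTheory.integral_fintype_prod_eq_prod]
  refine Finset.prod_eq_one fun r _ => ?_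
  by_cases h : r = ℓ
  · subst h; simpa using (hf r).int_one
  · simpa [h] using (hg r).int_one

lemma integrable_gdens (hg : ∀ ℓ, IsPosDensity (g ℓ)) : Integrable (gdens g) :=
  Integrable.fintype_prod fun r => (hg r).integrable

lemma integral_gdens (hg : ∀ ℓ, IsPosDensity (g ℓ)) : ∫ x, gdens g x = 1 := by
  rw [show gdens g = fun x => ∏ r, g r (x r) from rfl, MeasureTheory.volume_pi,
    MeasureTheory.integral_fintype_prod_eq_prod]
  exact Finset.prod_eq_one fun r _ => (hg r).int_one

lemma integrable_pbar1 (hf : ∀ ℓ, IsPosDensity (f ℓ)) (hg : ∀ ℓ, IsPosDensity (g ℓ))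
    (α : Fin L → ℝ) : Integrable (pbar1 f g α) := by
  have h : pbar1 f g α = fun x => ∑ ℓ, α ℓ * pdens1 f g ℓ x := rfl
  rw [h]
  exact integrable_finset_sum _ fun ℓ _ => (integrable_pdens1 hf hg ℓ).const_mul (α ℓ)

lemma integral_pbar1 (hf : ∀ ℓ, IsPosDensity (f ℓ)) (hg : ∀ ℓ, IsPosDensity (g ℓ))
    (α : Fin L → ℝ) : ∫ x, pbar1 f g α x = ∑ ℓ, α ℓ := by
  have h : (fun x : Obs L => pbar1 f g α x) = fun x => ∑ ℓ, α ℓ * pdens1 f g ℓ x := rfl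
  rw [h, integral_finset_sum _ fun ℓ _ => (integrable_pdens1 hf hg ℓ).const_mul (α ℓ)]
  exact Finset.sum_congr rfl fun ℓ _ => by
    rw [integral_const_mul, integral_pdens1 hf hg ℓ, mul_one]

lemma Rfun_update (α : Fin L → ℝ) (ℓ₁ : Fin L) (y : Obs L) (s : ℝ) :
    Rfun f g α (Function.update y ℓ₁ s) =
      Rfun f g α y - α ℓ₁ * (f ℓ₁ (y ℓ₁) / g ℓ₁ (y ℓ₁)) + α ℓ₁ * (f ℓ₁ s / g ℓ₁ s) := by
  unfold Rfun
  rw [← Finset.add_sum_erase _ _ (Finset.mem_univ ℓ₁),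
    ← Finset.add_sum_erase _ (fun ℓ => α ℓ * (f ℓ (y ℓ) / g ℓ (y ℓ))) (Finset.mem_univ ℓ₁)]
  have h1 : ∑ r ∈ Finset.univ.erase ℓ₁,
      α r * (f r (Function.update y ℓ₁ s r) / g r (Function.update y ℓ₁ s r)) =
      ∑ r ∈ Finset.univ.erase ℓ₁, α r * (f r (y r) / g r (y r)) :=
    Finset.sum_congr rfl fun r hr => by
      rw [Function.update_of_ne (Finset.ne_of_mem_erase hr)]
  rw [h1, Function.update_self]
  ring

end Aux

section Fubini

variable {L : ℕ} {f g : Fin L → ℝ → ℝ}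

lemma lmarginal_const_mul (μ : Fin L → Measure ℝ) (s : Finset (Fin L)) (c : ℝ≥0∞)
    {B : Obs L → ℝ≥0∞} (hB : Measurable B) (x : Obs L) :
    (∫⋯∫⁻_s, (fun y => c * B y) ∂μ) x = c * (∫⋯∫⁻_s, B ∂μ) x := by
  simp only [MeasureTheory.lmarginal]
  exact lintegral_const_mul c (hB.comp measurable_updateFinset)

/-- Integrating out one distinguished coordinate with density `d`. -/
lemma lintegral_coord_factor (ℓ₀ : Fin L) {d : ℝ → ℝ} (hd : Measurable d)
    {B : Obs L → ℝ≥0∞} (hB : Measurable B)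
    (hBinv : ∀ x t, B (Function.update x ℓ₀ t) = B x) :
    ∫⁻ x : Obs L, ENNReal.ofReal (d (x ℓ₀)) * B x =
      (∫⁻ t : ℝ, ENNReal.ofReal (d t)) *
        (∫⋯∫⁻_Finset.univ.erase ℓ₀, B ∂(fun _ : Fin L => (volume : Measure ℝ)))
          (fun _ => 0) := by
  have hF : Measurable fun x : Obs L => ENNReal.ofReal (d (x ℓ₀)) * B x :=
    ((hd.comp (measurable_pi_apply ℓ₀)).ennreal_ofReal).mul hB
  rw [MeasureTheory.volume_pi,
    MeasureTheory.lintegral_eq_lmarginal_univ (μ := fun _ : Fin L => (volume : Measure ℝ))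
      (fun _ => (0 : ℝ)),
    MeasureTheory.lmarginal_erase' _ hF (Finset.mem_univ ℓ₀)]
  have h1 : (fun x : Obs L => ∫⁻ t, ENNReal.ofReal (d ((Function.update x ℓ₀ t) ℓ₀)) *
      B (Function.update x ℓ₀ t) ∂volume) =
      fun x => (∫⁻ t : ℝ, ENNReal.ofReal (d t)) * B x := by
    funext x
    have : ∀ t : ℝ, ENNReal.ofReal (d ((Function.update x ℓ₀ t) ℓ₀)) *
        B (Function.update x ℓ₀ t) = ENNReal.ofReal (d t) * B x := fun t => by
      rw [Function.update_self, hBinv]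
    rw [lintegral_congr this]
    exact lintegral_mul_const _ hd.ennreal_ofReal
  rw [h1, lmarginal_const_mul _ _ _ hB]

/-- Tonelli for a product of one-variable factors over the coordinates. -/
lemma lintegral_prod_coord (E : Fin L → ℝ → ℝ≥0∞) (hE : ∀ r, Measurable (E r)) :
    ∫⁻ x : Obs L, ∏ r, E r (x r) ∂volume = ∏ r, ∫⁻ t, E r t ∂volume := by
  have key : ∀ s : Finset (Fin L),
      (∫⋯∫⁻_s, (fun x : Obs L => ∏ r ∈ s, E r (x r))
        ∂(fun _ : Fin L => (volume : Measure ℝ))) =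
      fun _ => ∏ r ∈ s, ∫⁻ t, E r t ∂volume := by
    intro s
    induction s using Finset.induction with
    | empty => simp [MeasureTheory.lmarginal_empty]
    | @insert i s hi ih =>
      have hmeas : Measurable fun x : Obs L => ∏ r ∈ insert i s, E r (x r) :=
        Finset.measurable_prod _ fun r _ => (hE r).comp (measurable_pi_apply r)
      funext x
      rw [MeasureTheory.lmarginal_insert _ hmeas hi]
      have h2 : ∀ t : ℝ, (∫⋯∫⁻_s, (fun x : Obs L => ∏ r ∈ insert i s, E r (x r))
          ∂(fun _ : Fin L => (volume : Measure ℝ))) (Function.update x i t) =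
          E i t * ∏ r ∈ s, ∫⁻ u, E r u ∂volume := by
        intro t
        have hprodeq : (fun y : Obs L => ∏ r ∈ insert i s, E r (y r)) =
            fun y => E i (y i) * ∏ r ∈ s, E r (y r) := by
          funext y; exact Finset.prod_insert hi
        rw [hprodeq]
        have hsm : Measurable fun y : Obs L => ∏ r ∈ s, E r (y r) :=
          Finset.measurable_prod _ fun r _ => (hE r).comp (measurable_pi_apply r)
        have hpull : (∫⋯∫⁻_s, (fun y : Obs L => E i (y i) * ∏ r ∈ s, E r (y r))
            ∂(fun _ : Fin L => (volume : Measure ℝ))) (Function.update x i t) =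
            E i t * (∫⋯∫⁻_s, (fun y : Obs L => ∏ r ∈ s, E r (y r))
              ∂(fun _ : Fin L => (volume : Measure ℝ))) (Function.update x i t) := by
          simp only [MeasureTheory.lmarginal]
          have hyeq : ∀ y : {r // r ∈ s} → ℝ,
              Function.updateFinset (Function.update x i t) s y i = t := fun y => by
            simp only [Function.updateFinset]
            rw [dif_neg hi, Function.update_self]
          have hstep : ∀ y : {r // r ∈ s} → ℝ,
              E i (Function.updateFinset (Function.update x i t) s y i) *
                ∏ r ∈ s, E r (Function.updateFinset (Function.update x i t) s y r) =
              E i t * ∏ r ∈ s, E r (Function.updateFinset (Function.update x i t) s y r) :=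
            fun y => by rw [hyeq]
          rw [lintegral_congr hstep]
          exact lintegral_const_mul _ (hsm.comp measurable_updateFinset)
        rw [hpull, ih]
      rw [lintegral_congr h2, lintegral_mul_const _ (hE i), Finset.prod_insert hi]
  rw [MeasureTheory.volume_pi,
    MeasureTheory.lintegral_eq_lmarginal_univ (μ := fun _ : Fin L => (volume : Measure ℝ))
      (fun _ => (0 : ℝ))]
  have h3 : (fun x : Obs L => ∏ r, E r (x r)) =
      fun x : Obs L => ∏ r ∈ Finset.univ, E r (x r) := rfl
  rw [h3, key Finset.univ]

/-- Replacing the anomalous density at `ℓ₀` by the nominal one under a factor invariant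
in coordinate `ℓ₀`. -/
lemma lintegral_pdens1_mul_eq (hf : ∀ ℓ, IsPosDensity (f ℓ)) (hg : ∀ ℓ, IsPosDensity (g ℓ))
    (ℓ₀ : Fin L) {H : Obs L → ℝ≥0∞} (hH : Measurable H)
    (hHinv : ∀ x t, H (Function.update x ℓ₀ t) = H x) :
    ∫⁻ x : Obs L, ENNReal.ofReal (pdens1 f g ℓ₀ x) * H x =
      ∫⁻ x : Obs L, ENNReal.ofReal (gdens g x) * H x := by
  set B : Obs L → ℝ≥0∞ :=
    fun x => (∏ r ∈ Finset.univ.erase ℓ₀, ENNReal.ofReal (g r (x r))) * H x with hBdef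
  have hBmeas : Measurable B :=
    (Finset.measurable_prod _ fun r _ =>
      ((hg r).meas.comp (measurable_pi_apply r)).ennreal_ofReal).mul hH
  have hBinv : ∀ x t, B (Function.update x ℓ₀ t) = B x := by
    intro x t
    simp only [hBdef]
    rw [hHinv]
    congr 1
    exact Finset.prod_congr rfl fun r hr => by
      rw [Function.update_of_ne (Finset.ne_of_mem_erase hr)]
  have h1 : ∀ x : Obs L, ENNReal.ofReal (pdens1 f g ℓ₀ x) * H x =
      ENNReal.ofReal (f ℓ₀ (x ℓ₀)) * B x := by
    intro x
    rw [pdens1_eq_mul_erase, ENNReal.ofReal_mul ((hf ℓ₀).pos _).le,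
      ENNReal.ofReal_prod_of_nonneg (fun r _ => ((hg r).pos _).le), hBdef, mul_assoc]
  have h2 : ∀ x : Obs L, ENNReal.ofReal (gdens g x) * H x =
      ENNReal.ofReal (g ℓ₀ (x ℓ₀)) * B x := by
    intro x
    rw [gdens_eq_mul_erase ℓ₀, ENNReal.ofReal_mul ((hg ℓ₀).pos _).le,
      ENNReal.ofReal_prod_of_nonneg (fun r _ => ((hg r).pos _).le), hBdef, mul_assoc]
  rw [lintegral_congr h1, lintegral_congr h2,
    lintegral_coord_factor ℓ₀ (hf ℓ₀).meas hBmeas hBinv,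
    lintegral_coord_factor ℓ₀ (hg ℓ₀).meas hBmeas hBinv,
    (hf ℓ₀).lintegral_eq_one, (hg ℓ₀).lintegral_eq_one]

end Fubini

section Gibbs

variable {L : ℕ} {f g : Fin L → ℝ → ℝ}

lemma lintegral_pdens1_one (hf : ∀ ℓ, IsPosDensity (f ℓ)) (hg : ∀ ℓ, IsPosDensity (g ℓ))
    (ℓ : Fin L) : ∫⁻ x : Obs L, ENNReal.ofReal (pdens1 f g ℓ x) = 1 := by
  have hmeas : ∀ r : Fin L, Measurable fun t => ENNReal.ofReal ((if r = ℓ then f r else g r) t) := by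
    intro r
    by_cases h : r = ℓ
    · simpa only [if_pos h] using (hf r).meas.ennreal_ofReal
    · simpa only [if_neg h] using (hg r).meas.ennreal_ofReal
  have h1 : ∀ x : Obs L, ENNReal.ofReal (pdens1 f g ℓ x) =
      ∏ r, (fun t => ENNReal.ofReal ((if r = ℓ then f r else g r) t)) (x r) := by
    intro x
    rw [show pdens1 f g ℓ x = ∏ r, (if r = ℓ then f r else g r) (x r) from
      congrFun (pdens1_eq_prod ℓ) x]
    exact ENNReal.ofReal_prod_of_nonneg fun r _ => by
      by_cases h : r = ℓ <;>
        simp [h, ((hf ℓ).pos _).le, ((hf r).pos _).le, ((hg r).pos _).le]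
  rw [lintegral_congr h1, lintegral_prod_coord _ hmeas]
  refine Finset.prod_eq_one fun r _ => ?_
  by_cases h : r = ℓ
  · simpa [h] using (hf r).lintegral_eq_one
  · simpa [h] using (hg r).lintegral_eq_one

/-- If the mixture likelihood ratio equals `1` a.e. and `α ℓ₁ > 0`, then `f ℓ₁ = g ℓ₁` a.e. -/
lemma ae_eq_of_R_ae_one (hf : ∀ ℓ, IsPosDensity (f ℓ)) (hg : ∀ ℓ, IsPosDensity (g ℓ))
    {α : Fin L → ℝ} (hnn : ∀ r, 0 ≤ α r) (hsum : ∑ r, α r = 1) {ℓ₁ : Fin L}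
    (hpos : 0 < α ℓ₁) (hae : ∀ᵐ x : Obs L, Rfun f g α x = 1) :
    f ℓ₁ =ᵐ[volume] g ℓ₁ := by
  classical
  set q₁ := pdens1 f g ℓ₁ with hq₁
  have hq₁meas : Measurable q₁ := measurable_pdens1 hf hg ℓ₁
  have hq₁nn : ∀ x, 0 ≤ q₁ x := fun x => (pdens1_pos hf hg ℓ₁ x).le
  set W : Fin L → ℝ≥0∞ := fun ℓ =>
    ∫⁻ x : Obs L, ENNReal.ofReal (q₁ x) * ENNReal.ofReal (f ℓ (x ℓ) / g ℓ (x ℓ)) with hW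
  set K : ℝ≥0∞ := ∫⁻ t : ℝ, ENNReal.ofReal (f ℓ₁ t * (f ℓ₁ t / g ℓ₁ t)) with hK
  -- step 1 : `W ℓ = 1` for `ℓ ≠ ℓ₁`
  have hWne : ∀ ℓ, ℓ ≠ ℓ₁ → W ℓ = 1 := by
    intro ℓ hne
    set E : Fin L → ℝ → ℝ := fun r => if r = ℓ₁ then f r else if r = ℓ then f r else g r with hE
    have hEnn : ∀ r t, 0 ≤ E r t := fun r t => by
      by_cases h1 : r = ℓ₁
      · subst h1; simp [hE, ((hf r).pos t).le]
      · by_cases h2 : r = ℓ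
        · subst h2; simp [hE, h1, ((hf r).pos t).le]
        · simp [hE, h1, h2, ((hg r).pos t).le]
    have hEmeas : ∀ r, Measurable fun t => ENNReal.ofReal (E r t) := fun r => by
      by_cases h1 : r = ℓ₁
      · simpa [hE, h1] using (hf r).meas.ennreal_ofReal
      · by_cases h2 : r = ℓ
        · simpa [hE, h1, h2] using (hf r).meas.ennreal_ofReal
        · simpa [hE, h1, h2] using (hg r).meas.ennreal_ofReal
    have hEint : ∀ r, ∫⁻ t, ENNReal.ofReal (E r t) = 1 := fun r => by
      by_cases h1 : r = ℓ₁
      · simpa [hE, h1] using (hf r).lintegral_eq_one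
      · by_cases h2 : r = ℓ
        · simpa [hE, h1, h2] using (hf r).lintegral_eq_one
        · simpa [hE, h1, h2] using (hg r).lintegral_eq_one
    have hreal : ∀ x : Obs L, q₁ x * (f ℓ (x ℓ) / g ℓ (x ℓ)) = ∏ r, E r (x r) := by
      intro x
      have h1 : q₁ x = g ℓ (x ℓ) *
          ∏ r ∈ Finset.univ.erase ℓ, (if r = ℓ₁ then f r (x r) else g r (x r)) := by
        rw [hq₁, pdens1, ← Finset.mul_prod_erase Finset.univ _ (Finset.mem_univ ℓ), if_neg hne]
      have h2 : ∏ r, E r (x r) = f ℓ (x ℓ) *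
          ∏ r ∈ Finset.univ.erase ℓ, (if r = ℓ₁ then f r (x r) else g r (x r)) := by
        rw [← Finset.mul_prod_erase Finset.univ (fun r => E r (x r)) (Finset.mem_univ ℓ)]
        congr 1
        · simp [hE, hne]
        · refine Finset.prod_congr rfl fun r hr => ?_
          have hr2 : r ≠ ℓ := Finset.ne_of_mem_erase hr
          by_cases h3 : r = ℓ₁ <;> simp [hE, h3, hr2]
      have h3 : g ℓ (x ℓ) * (f ℓ (x ℓ) / g ℓ (x ℓ)) = f ℓ (x ℓ) := by
        rw [mul_comm]
        exact div_mul_cancel₀ _ ((hg ℓ).pos _).ne'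
      rw [h1, h2]
      calc g ℓ (x ℓ) * (∏ r ∈ Finset.univ.erase ℓ, if r = ℓ₁ then f r (x r) else g r (x r)) *
            (f ℓ (x ℓ) / g ℓ (x ℓ))
          = g ℓ (x ℓ) * (f ℓ (x ℓ) / g ℓ (x ℓ)) *
            ∏ r ∈ Finset.univ.erase ℓ, (if r = ℓ₁ then f r (x r) else g r (x r)) := by ring
        _ = f ℓ (x ℓ) *
            ∏ r ∈ Finset.univ.erase ℓ, (if r = ℓ₁ then f r (x r) else g r (x r)) := by rw [h3]
    have hpoint : ∀ x : Obs L,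
        ENNReal.ofReal (q₁ x) * ENNReal.ofReal (f ℓ (x ℓ) / g ℓ (x ℓ)) =
        ∏ r, (fun t => ENNReal.ofReal (E r t)) (x r) := by
      intro x
      rw [← ENNReal.ofReal_mul (hq₁nn x), hreal x]
      exact ENNReal.ofReal_prod_of_nonneg fun r _ => hEnn r _
    rw [hW]
    simp only []
    rw [lintegral_congr hpoint, lintegral_prod_coord _ hEmeas]
    exact Finset.prod_eq_one fun r _ => hEint r
  -- step 2 : `W ℓ₁ = K`
  have hWl1 : W ℓ₁ = K := by
    set E : Fin L → ℝ → ℝ :=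
      fun r => if r = ℓ₁ then (fun t => f r t * (f r t / g r t)) else g r with hE
    have hEnn : ∀ r t, 0 ≤ E r t := fun r t => by
      by_cases h1 : r = ℓ₁
      · subst h1
        simp [hE, mul_nonneg ((hf r).pos t).le
          (div_nonneg ((hf r).pos t).le ((hg r).pos t).le)]
      · simp [hE, h1, ((hg r).pos t).le]
    have hEmeas : ∀ r, Measurable fun t => ENNReal.ofReal (E r t) := fun r => by
      by_cases h1 : r = ℓ₁
      · simpa [hE, h1] using ((hf r).meas.mul ((hf r).meas.div (hg r).meas)).ennreal_ofReal
      · simpa [hE, h1] using (hg r).meas.ennreal_ofReal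
    have hreal : ∀ x : Obs L, q₁ x * (f ℓ₁ (x ℓ₁) / g ℓ₁ (x ℓ₁)) = ∏ r, E r (x r) := by
      intro x
      have h1 : q₁ x = f ℓ₁ (x ℓ₁) * ∏ r ∈ Finset.univ.erase ℓ₁, g r (x r) :=
        pdens1_eq_mul_erase ℓ₁ x
      have h2 : ∏ r, E r (x r) = (f ℓ₁ (x ℓ₁) * (f ℓ₁ (x ℓ₁) / g ℓ₁ (x ℓ₁))) *
          ∏ r ∈ Finset.univ.erase ℓ₁, g r (x r) := by
        rw [← Finset.mul_prod_erase Finset.univ (fun r => E r (x r)) (Finset.mem_univ ℓ₁)]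
        congr 1
        · simp [hE]
        · exact Finset.prod_congr rfl fun r hr => by
            simp [hE, Finset.ne_of_mem_erase hr]
      rw [h1, h2]
      ring
    have hpoint : ∀ x : Obs L,
        ENNReal.ofReal (q₁ x) * ENNReal.ofReal (f ℓ₁ (x ℓ₁) / g ℓ₁ (x ℓ₁)) =
        ∏ r, (fun t => ENNReal.ofReal (E r t)) (x r) := by
      intro x
      rw [← ENNReal.ofReal_mul (hq₁nn x), hreal x]
      exact ENNReal.ofReal_prod_of_nonneg fun r _ => hEnn r _
    rw [hW]
    simp only []
    rw [lintegral_congr hpoint, lintegral_prod_coord _ hEmeas,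
      ← Finset.mul_prod_erase Finset.univ _ (Finset.mem_univ ℓ₁)]
    have h4 : ∏ r ∈ Finset.univ.erase ℓ₁, ∫⁻ t, ENNReal.ofReal (E r t) = 1 :=
      Finset.prod_eq_one fun r hr => by
        simpa [hE, Finset.ne_of_mem_erase hr] using (hg r).lintegral_eq_one
    rw [h4, mul_one, hK, hE]
    simp
  -- step 3 : compute `T` two ways
  set T : ℝ≥0∞ := ∫⁻ x : Obs L, ENNReal.ofReal (q₁ x) * ENNReal.ofReal (Rfun f g α x) with hT
  have hT1 : T = 1 := by
    have : ∀ᵐ x : Obs L, ENNReal.ofReal (q₁ x) * ENNReal.ofReal (Rfun f g α x) =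
        ENNReal.ofReal (q₁ x) := hae.mono fun x hx => by rw [hx, ENNReal.ofReal_one, mul_one]
    rw [hT, lintegral_congr_ae this, lintegral_pdens1_one hf hg ℓ₁]
  have hT2 : T = ∑ ℓ, ENNReal.ofReal (α ℓ) * W ℓ := by
    have hpoint : ∀ x : Obs L, ENNReal.ofReal (q₁ x) * ENNReal.ofReal (Rfun f g α x) =
        ∑ ℓ, ENNReal.ofReal (α ℓ) *
          (ENNReal.ofReal (q₁ x) * ENNReal.ofReal (f ℓ (x ℓ) / g ℓ (x ℓ))) := by
      intro x
      rw [Rfun, ENNReal.ofReal_sum_of_nonneg fun ℓ _ =>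
        mul_nonneg (hnn ℓ) (div_nonneg ((hf ℓ).pos _).le ((hg ℓ).pos _).le), Finset.mul_sum]
      exact Finset.sum_congr rfl fun ℓ _ => by
        rw [ENNReal.ofReal_mul (hnn ℓ)]; ring
    have hm : ∀ ℓ : Fin L, Measurable fun x : Obs L =>
        ENNReal.ofReal (q₁ x) * ENNReal.ofReal (f ℓ (x ℓ) / g ℓ (x ℓ)) := fun ℓ =>
      hq₁meas.ennreal_ofReal.mul
        (Measurable.ennreal_ofReal (Measurable.div
          ((hf ℓ).meas.comp (measurable_pi_apply ℓ))
          ((hg ℓ).meas.comp (measurable_pi_apply ℓ))))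
    rw [hT, lintegral_congr hpoint,
      lintegral_finset_sum _ fun ℓ _ => (hm ℓ).const_mul _]
    exact Finset.sum_congr rfl fun ℓ _ => lintegral_const_mul _ (hm ℓ)
  -- step 4 : conclude `K = 1`
  have hsplit : ∑ ℓ, ENNReal.ofReal (α ℓ) * W ℓ =
      ENNReal.ofReal (α ℓ₁) * K + ∑ ℓ ∈ Finset.univ.erase ℓ₁, ENNReal.ofReal (α ℓ) := by
    rw [← Finset.add_sum_erase _ (fun ℓ => ENNReal.ofReal (α ℓ) * W ℓ) (Finset.mem_univ ℓ₁),
      hWl1]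
    exact congrArg _ (Finset.sum_congr rfl fun ℓ hℓ => by
      rw [hWne ℓ (Finset.ne_of_mem_erase hℓ), mul_one])
  have hone : (1 : ℝ≥0∞) = ENNReal.ofReal (α ℓ₁) +
      ∑ ℓ ∈ Finset.univ.erase ℓ₁, ENNReal.ofReal (α ℓ) := by
    have ha : (1 : ℝ≥0∞) = ∑ ℓ, ENNReal.ofReal (α ℓ) := by
      rw [← ENNReal.ofReal_sum_of_nonneg fun ℓ _ => hnn ℓ, hsum, ENNReal.ofReal_one]
    rw [ha, ← Finset.add_sum_erase _ (fun ℓ => ENNReal.ofReal (α ℓ)) (Finset.mem_univ ℓ₁)]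
  have hSne : (∑ ℓ ∈ Finset.univ.erase ℓ₁, ENNReal.ofReal (α ℓ)) ≠ ⊤ := by
    intro hcon
    rw [hcon, add_top] at hone
    exact ENNReal.one_ne_top hone
  have hcancel : ENNReal.ofReal (α ℓ₁) * K = ENNReal.ofReal (α ℓ₁) := by
    have h5 : ENNReal.ofReal (α ℓ₁) * K + ∑ ℓ ∈ Finset.univ.erase ℓ₁, ENNReal.ofReal (α ℓ) =
        ENNReal.ofReal (α ℓ₁) + ∑ ℓ ∈ Finset.univ.erase ℓ₁, ENNReal.ofReal (α ℓ) := by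
      rw [← hsplit, ← hT2, hT1, hone]
    have h6 := h5
    rw [add_comm (ENNReal.ofReal (α ℓ₁) * K) _, add_comm (ENNReal.ofReal (α ℓ₁)) _] at h6
    exact (ENNReal.add_right_inj hSne).mp h6
  have hKone : K = 1 := by
    have h0 : ENNReal.ofReal (α ℓ₁) ≠ 0 := by
      simp [ENNReal.ofReal_eq_zero, not_le, hpos]
    have htop : ENNReal.ofReal (α ℓ₁) ≠ ⊤ := ENNReal.ofReal_ne_top
    refine (ENNReal.mul_right_inj h0 htop).mp ?_
    rw [mul_one, hcancel]
  -- step 5 : from `K = 1` deduce `f ℓ₁ = g ℓ₁` a.e.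
  set φ : ℝ → ℝ := fun t => f ℓ₁ t * (f ℓ₁ t / g ℓ₁ t) with hφ
  have hφnn : ∀ t, 0 ≤ φ t := fun t =>
    mul_nonneg ((hf ℓ₁).pos t).le (div_nonneg ((hf ℓ₁).pos t).le ((hg ℓ₁).pos t).le)
  have hφmeas : Measurable φ := (hf ℓ₁).meas.mul ((hf ℓ₁).meas.div (hg ℓ₁).meas)
  have hφint : Integrable φ := by
    refine ⟨hφmeas.aestronglyMeasurable, ?_⟩
    rw [hasFiniteIntegral_iff_ofReal (Filter.Eventually.of_forall hφnn)]
    rw [hφ]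
    rw [show (∫⁻ t, ENNReal.ofReal (f ℓ₁ t * (f ℓ₁ t / g ℓ₁ t))) = K from rfl, hKone]
    exact ENNReal.one_lt_top
  have hφone : ∫ t, φ t = 1 := by
    rw [integral_eq_lintegral_of_nonneg_ae (Filter.Eventually.of_forall hφnn)
      hφmeas.aestronglyMeasurable]
    rw [show (∫⁻ t, ENNReal.ofReal (φ t)) = K from rfl, hKone]
    simp
  set D : ℝ → ℝ := fun t => φ t - 2 * f ℓ₁ t + g ℓ₁ t with hD
  have hDeq : ∀ t, D t = (f ℓ₁ t - g ℓ₁ t) ^ 2 / g ℓ₁ t := by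
    intro t
    rw [hD]
    simp only [hφ]
    field_simp [((hg ℓ₁).pos t).ne']
    ring
  have hDnn : ∀ t, 0 ≤ D t := fun t => by
    rw [hDeq t]; exact div_nonneg (sq_nonneg _) ((hg ℓ₁).pos t).le
  have hDint : Integrable D :=
    (hφint.sub ((hf ℓ₁).integrable.const_mul 2)).add (hg ℓ₁).integrable
  have hDzero : ∫ t, D t = 0 := by
    rw [hD]
    have h7 : ∫ t, (φ t - 2 * f ℓ₁ t + g ℓ₁ t) =
        (∫ t, (φ t - 2 * f ℓ₁ t)) + ∫ t, g ℓ₁ t :=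
      integral_add (hφint.sub ((hf ℓ₁).integrable.const_mul 2)) (hg ℓ₁).integrable
    have h8 : ∫ t, (φ t - 2 * f ℓ₁ t) = (∫ t, φ t) - ∫ t, 2 * f ℓ₁ t :=
      integral_sub hφint ((hf ℓ₁).integrable.const_mul 2)
    rw [h7, h8, hφone, integral_const_mul, (hf ℓ₁).int_one, (hg ℓ₁).int_one]
    ring
  have hDae : D =ᵐ[volume] 0 :=
    (integral_eq_zero_iff_of_nonneg_ae (Filter.Eventually.of_forall hDnn) hDint).mp hDzero
  refine hDae.mono fun t ht => ?_
  have h9 : (f ℓ₁ t - g ℓ₁ t) ^ 2 / g ℓ₁ t = 0 := by rw [← hDeq t]; simpa using ht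
  have h10 : (f ℓ₁ t - g ℓ₁ t) ^ 2 = 0 := by
    rcases div_eq_zero_iff.mp h9 with h | h
    · exact h
    · exact absurd h ((hg ℓ₁).pos t).ne'
  have h11 : f ℓ₁ t - g ℓ₁ t = 0 :=
    (pow_eq_zero_iff (by norm_num : (2 : ℕ) ≠ 0)).mp h10
  linarith

end Gibbs

section Main

variable {L : ℕ} {f g : Fin L → ℝ → ℝ}

lemma sub_one_le_mul_log {u : ℝ} (hu : 0 < u) : u - 1 ≤ u * Real.log u := by
  have h := Real.log_le_sub_one_of_pos (inv_pos.mpr hu)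
  rw [Real.log_inv] at h
  have hui : u * u⁻¹ = 1 := mul_inv_cancel₀ hu.ne'
  nlinarith

theorem stmt7' {L : ℕ} (hL : 1 ≤ L)
    (f g : Fin L → ℝ → ℝ)
    (hf : ∀ ℓ, IsPosDensity (f ℓ)) (hg : ∀ ℓ, IsPosDensity (g ℓ))
    (hfg : ∀ ℓ, 0 < volume {t | f ℓ t ≠ g ℓ t})
    (habs : ∀ (ℓ : Fin L) (α : Fin L → ℝ), (∀ r, 0 ≤ α r) → ∑ r, α r = 1 →
      ∫⁻ x : Obs L, ENNReal.ofReal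
        (pdens1 f g ℓ x * |Real.log (pbar1 f g α x / gdens g x)|) ∂volume < ⊤)
    (hIfin : ∀ α : Fin L → ℝ, (∀ r, 0 ≤ α r) → ∑ r, α r = 1 →
      Integrable (fun x : Obs L => pbar1 f g α x * Real.log (pbar1 f g α x / gdens g x))
        volume)
    (αstar : Fin L → ℝ) (hαnn : ∀ r, 0 ≤ αstar r) (hαsum : ∑ r, αstar r = 1)
    (hmin : ∀ α : Fin L → ℝ, (∀ r, 0 ≤ α r) → ∑ r, α r = 1 →
      (∫ x : Obs L, pbar1 f g αstar x * Real.log (pbar1 f g αstar x / gdens g x)) ≤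
        ∫ x : Obs L, pbar1 f g α x * Real.log (pbar1 f g α x / gdens g x)) :
    ∀ ℓ, 0 < αstar ℓ := by
  intro ℓ₀
  rcases (hαnn ℓ₀).lt_or_eq with hlt | heq
  · exact hlt
  exfalso
  have hz : αstar ℓ₀ = 0 := heq.symm
  -- basic positivity
  have hppos : ∀ x, 0 < pbar1 f g αstar x := pbar1_pos hf hg hαnn hαsum
  have hqpos : ∀ x, 0 < pdens1 f g ℓ₀ x := pdens1_pos hf hg ℓ₀
  have hGpos : ∀ x, 0 < gdens g x := gdens_pos hg
  have hRpos : ∀ x, 0 < Rfun f g αstar x := Rfun_pos hf hg hαnn hαsum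
  have hRinv : ∀ (x : Obs L) (t : ℝ),
      Rfun f g αstar (Function.update x ℓ₀ t) = Rfun f g αstar x := fun x t => by
    rw [Rfun_update, hz]; ring
  -- the Dirac weight at ℓ₀
  set δ : Fin L → ℝ := fun r => if r = ℓ₀ then (1 : ℝ) else 0 with hδ
  have hδnn : ∀ r, 0 ≤ δ r := fun r => by by_cases h : r = ℓ₀ <;> simp [hδ, h]
  have hδsum : ∑ r, δ r = 1 := by simp [hδ, Finset.sum_ite_eq']
  have hpδ : ∀ x, pbar1 f g δ x = pdens1 f g ℓ₀ x := fun x => by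
    simp [pbar1, hδ, ite_mul, Finset.sum_ite_eq']
  have hRδpos : ∀ x, 0 < Rfun f g δ x := Rfun_pos hf hg hδnn hδsum
  -- measurability
  have hq_meas : Measurable (pdens1 f g ℓ₀) := measurable_pdens1 hf hg ℓ₀
  have hp_meas : Measurable (pbar1 f g αstar) := measurable_pbar1 hf hg αstar
  have hG_meas : Measurable (gdens g) := measurable_gdens hg
  have hR_meas : Measurable (Rfun f g αstar) := measurable_Rfun hf hg αstar
  -- integrability of q * log R_α for any simplex weight α
  have hqlog_int : ∀ α : Fin L → ℝ, (∀ r, 0 ≤ α r) → ∑ r, α r = 1 →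
      Integrable (fun x : Obs L => pdens1 f g ℓ₀ x * Real.log (Rfun f g α x)) := by
    intro α hnn hsum
    have hmeas : Measurable fun x : Obs L => pdens1 f g ℓ₀ x * Real.log (Rfun f g α x) :=
      hq_meas.mul (Real.measurable_log.comp (measurable_Rfun hf hg α))
    refine ⟨hmeas.aestronglyMeasurable, ?_⟩
    rw [hasFiniteIntegral_iff_norm]
    have hfin := habs ℓ₀ α hnn hsum
    simp only [pbar1_div hg] at hfin
    refine lt_of_eq_of_lt (lintegral_congr fun x => ?_) hfin
    rw [Real.norm_eq_abs, abs_mul, abs_of_nonneg (hqpos x).le]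
  have hB : Integrable (fun x : Obs L => pdens1 f g ℓ₀ x * Real.log (Rfun f g αstar x)) :=
    hqlog_int αstar hαnn hαsum
  have hBδ : Integrable (fun x : Obs L => pdens1 f g ℓ₀ x * Real.log (Rfun f g δ x)) :=
    hqlog_int δ hδnn hδsum
  -- transfer of lintegrals from q to G
  have habs' : ∫⁻ x : Obs L,
      ENNReal.ofReal (gdens g x * |Real.log (Rfun f g αstar x)|) < ⊤ := by
    have hH : Measurable fun x : Obs L => ENNReal.ofReal |Real.log (Rfun f g αstar x)| :=
      ((Real.measurable_log.comp hR_meas).abs).ennreal_ofReal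
    have hHinv : ∀ (x : Obs L) (t : ℝ),
        ENNReal.ofReal |Real.log (Rfun f g αstar (Function.update x ℓ₀ t))| =
        ENNReal.ofReal |Real.log (Rfun f g αstar x)| := fun x t => by rw [hRinv]
    have h1 : ∀ x : Obs L, ENNReal.ofReal (gdens g x * |Real.log (Rfun f g αstar x)|) =
        ENNReal.ofReal (gdens g x) * ENNReal.ofReal |Real.log (Rfun f g αstar x)| :=
      fun x => ENNReal.ofReal_mul (hGpos x).le
    have h2 : ∀ x : Obs L, ENNReal.ofReal (pdens1 f g ℓ₀ x * |Real.log (Rfun f g αstar x)|) =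
        ENNReal.ofReal (pdens1 f g ℓ₀ x) * ENNReal.ofReal |Real.log (Rfun f g αstar x)| :=
      fun x => ENNReal.ofReal_mul (hqpos x).le
    have hfin := habs ℓ₀ αstar hαnn hαsum
    simp only [pbar1_div hg] at hfin
    rw [lintegral_congr h1, ← lintegral_pdens1_mul_eq hf hg ℓ₀ hH hHinv,
      ← lintegral_congr h2]
    exact hfin
  have hGlog_int : Integrable (fun x : Obs L => gdens g x * Real.log (Rfun f g αstar x)) := by
    have hmeas : Measurable fun x : Obs L => gdens g x * Real.log (Rfun f g αstar x) :=
      hG_meas.mul (Real.measurable_log.comp hR_meas)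
    refine ⟨hmeas.aestronglyMeasurable, ?_⟩
    rw [hasFiniteIntegral_iff_norm]
    refine lt_of_eq_of_lt (lintegral_congr fun x => ?_) habs'
    rw [Real.norm_eq_abs, abs_mul, abs_of_nonneg (hGpos x).le]
  -- the key Fubini identity : ∫ q log R = ∫ G log R
  have hJeq : ∫ x : Obs L, pdens1 f g ℓ₀ x * Real.log (Rfun f g αstar x) =
      ∫ x : Obs L, gdens g x * Real.log (Rfun f g αstar x) := by
    rw [integral_eq_lintegral_pos_part_sub_lintegral_neg_part hB,
      integral_eq_lintegral_pos_part_sub_lintegral_neg_part hGlog_int]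
    have hHp : Measurable fun x : Obs L => ENNReal.ofReal (Real.log (Rfun f g αstar x)) :=
      (Real.measurable_log.comp hR_meas).ennreal_ofReal
    have hHpinv : ∀ (x : Obs L) (t : ℝ),
        ENNReal.ofReal (Real.log (Rfun f g αstar (Function.update x ℓ₀ t))) =
        ENNReal.ofReal (Real.log (Rfun f g αstar x)) := fun x t => by rw [hRinv]
    have hHn : Measurable fun x : Obs L => ENNReal.ofReal (-Real.log (Rfun f g αstar x)) :=
      (Real.measurable_log.comp hR_meas).neg.ennreal_ofReal
    have hHninv : ∀ (x : Obs L) (t : ℝ),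
        ENNReal.ofReal (-Real.log (Rfun f g αstar (Function.update x ℓ₀ t))) =
        ENNReal.ofReal (-Real.log (Rfun f g αstar x)) := fun x t => by rw [hRinv]
    have e1 : ∫⁻ x : Obs L, ENNReal.ofReal (pdens1 f g ℓ₀ x * Real.log (Rfun f g αstar x)) =
        ∫⁻ x : Obs L, ENNReal.ofReal (gdens g x * Real.log (Rfun f g αstar x)) := by
      have hh1 : ∀ x : Obs L, ENNReal.ofReal (pdens1 f g ℓ₀ x * Real.log (Rfun f g αstar x)) =
          ENNReal.ofReal (pdens1 f g ℓ₀ x) * ENNReal.ofReal (Real.log (Rfun f g αstar x)) :=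
        fun x => ENNReal.ofReal_mul (hqpos x).le
      have hh2 : ∀ x : Obs L, ENNReal.ofReal (gdens g x * Real.log (Rfun f g αstar x)) =
          ENNReal.ofReal (gdens g x) * ENNReal.ofReal (Real.log (Rfun f g αstar x)) :=
        fun x => ENNReal.ofReal_mul (hGpos x).le
      rw [lintegral_congr hh1, lintegral_congr hh2]
      exact lintegral_pdens1_mul_eq hf hg ℓ₀ hHp hHpinv
    have e2 : ∫⁻ x : Obs L, ENNReal.ofReal (-(pdens1 f g ℓ₀ x * Real.log (Rfun f g αstar x))) =
        ∫⁻ x : Obs L, ENNReal.ofReal (-(gdens g x * Real.log (Rfun f g αstar x))) := by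
      have hh1 : ∀ x : Obs L,
          ENNReal.ofReal (-(pdens1 f g ℓ₀ x * Real.log (Rfun f g αstar x))) =
          ENNReal.ofReal (pdens1 f g ℓ₀ x) * ENNReal.ofReal (-Real.log (Rfun f g αstar x)) :=
        fun x => by rw [← ENNReal.ofReal_mul (hqpos x).le, mul_neg]
      have hh2 : ∀ x : Obs L,
          ENNReal.ofReal (-(gdens g x * Real.log (Rfun f g αstar x))) =
          ENNReal.ofReal (gdens g x) * ENNReal.ofReal (-Real.log (Rfun f g αstar x)) :=
        fun x => by rw [← ENNReal.ofReal_mul (hGpos x).le, mul_neg]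
      rw [lintegral_congr hh1, lintegral_congr hh2]
      exact lintegral_pdens1_mul_eq hf hg ℓ₀ hHn hHninv
    rw [e1, e2]
  -- strict positivity of the set where R ≠ 1
  have hRne : 0 < volume {x : Obs L | Rfun f g αstar x ≠ 1} := by
    rcases (zero_le : (0 : ℝ≥0∞) ≤ volume {x : Obs L | Rfun f g αstar x ≠ 1}).lt_or_eq with h | h
    · exact h
    exfalso
    have hnull : volume {x : Obs L | Rfun f g αstar x ≠ 1} = 0 := h.symm
    have hae : ∀ᵐ x : Obs L, Rfun f g αstar x = 1 := by
      rw [ae_iff]; exact hnull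
    obtain ⟨ℓ₁, hℓ₁⟩ := exists_pos hαnn hαsum
    have h2 : f ℓ₁ =ᵐ[volume] g ℓ₁ := ae_eq_of_R_ae_one hf hg hαnn hαsum hℓ₁ hae
    have h3 : volume {t : ℝ | f ℓ₁ t ≠ g ℓ₁ t} = 0 := h2
    exact absurd h3 (hfg ℓ₁).ne'
  -- the negative directional term J < 0
  have hJ_neg : (∫ x : Obs L, gdens g x * Real.log (Rfun f g αstar x)) < 0 := by
    set Dfun : Obs L → ℝ :=
      fun x => pbar1 f g αstar x - gdens g x - gdens g x * Real.log (Rfun f g αstar x)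
      with hDfun
    have hDnn : ∀ x, 0 ≤ Dfun x := by
      intro x
      have h1 : pbar1 f g αstar x = Rfun f g αstar x * gdens g x := pbar1_eq hg αstar x
      have h2 := Real.log_le_sub_one_of_pos (hRpos x)
      have h3 := hGpos x
      simp only [hDfun]
      nlinarith
    have hDint : Integrable Dfun :=
      ((integrable_pbar1 hf hg αstar).sub (integrable_gdens hg)).sub hGlog_int
    have hDsup : 0 < volume (Function.support Dfun) := by
      refine lt_of_lt_of_le hRne (measure_mono ?_)
      intro x hx
      have hne : Rfun f g αstar x ≠ 1 := hx
      have h1 : pbar1 f g αstar x = Rfun f g αstar x * gdens g x := pbar1_eq hg αstar x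
      have h2 := Real.log_lt_sub_one_of_pos (hRpos x) hne
      have h3 := hGpos x
      have : 0 < Dfun x := by simp only [hDfun]; nlinarith
      exact this.ne'
    have hDpos : 0 < ∫ x, Dfun x :=
      (integral_pos_iff_support_of_nonneg hDnn hDint).mpr hDsup
    have hint1 : Integrable (fun x : Obs L => pbar1 f g αstar x - gdens g x) volume :=
      (integrable_pbar1 hf hg αstar).sub (integrable_gdens hg)
    have hDval : ∫ x, Dfun x =
        1 - 1 - ∫ x : Obs L, gdens g x * Real.log (Rfun f g αstar x) := by
      simp only [hDfun]
      rw [integral_sub hint1 hGlog_int,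
        integral_sub (integrable_pbar1 hf hg αstar) (integrable_gdens hg),
        integral_pbar1 hf hg αstar, hαsum, integral_gdens hg]
    rw [hDval] at hDpos
    linarith
  have hJq_neg : (∫ x : Obs L, pdens1 f g ℓ₀ x * Real.log (Rfun f g αstar x)) < 0 := by
    rw [hJeq]; exact hJ_neg
  -- KL numbers in R-form
  have hKL : ∀ α : Fin L → ℝ,
      (∫ x : Obs L, pbar1 f g α x * Real.log (pbar1 f g α x / gdens g x)) =
      ∫ x : Obs L, pbar1 f g α x * Real.log (Rfun f g α x) := by
    intro α; simp only [pbar1_div hg]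
  have hIint : Integrable (fun x : Obs L => pbar1 f g αstar x * Real.log (Rfun f g αstar x)) := by
    have h0 := hIfin αstar hαnn hαsum
    simpa only [pbar1_div hg] using h0
  have hIstar_nn : 0 ≤ ∫ x : Obs L, pbar1 f g αstar x * Real.log (Rfun f g αstar x) := by
    have key : 0 ≤ ∫ x : Obs L, (pbar1 f g αstar x * Real.log (Rfun f g αstar x) -
        (pbar1 f g αstar x - gdens g x)) := by
      refine integral_nonneg fun x => ?_
      have h1 : pbar1 f g αstar x = Rfun f g αstar x * gdens g x := pbar1_eq hg αstar x
      have h2 := sub_one_le_mul_log (hRpos x)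
      have h3 := hGpos x
      have h4 := mul_le_mul_of_nonneg_right h2 h3.le
      simp only [Pi.zero_apply]
      rw [h1]
      nlinarith [h4]
    have hint1 : Integrable (fun x : Obs L => pbar1 f g αstar x - gdens g x) volume :=
      (integrable_pbar1 hf hg αstar).sub (integrable_gdens hg)
    rw [integral_sub hIint hint1,
      integral_sub (integrable_pbar1 hf hg αstar) (integrable_gdens hg),
      integral_pbar1 hf hg αstar, hαsum, integral_gdens hg] at key
    linarith
  -- abbreviations for the perturbation argument
  set Jq : ℝ := ∫ x : Obs L, pdens1 f g ℓ₀ x * Real.log (Rfun f g αstar x) with hJq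
  set Istar : ℝ := ∫ x : Obs L, pbar1 f g αstar x * Real.log (Rfun f g αstar x) with hIstar
  have hc₀ : 0 < Istar - Jq := by
    linarith [hIstar_nn, hJq_neg]
  -- the perturbation sequence
  set t : ℕ → ℝ := fun n => 1 / ((n : ℝ) + 1) with ht
  have ht_pos : ∀ n, 0 < t n := fun n => by positivity
  have ht_le1 : ∀ n, t n ≤ 1 := fun n => by
    rw [ht]
    rw [div_le_one (by positivity)]
    simp
  set αn : ℕ → Fin L → ℝ := fun n r => (1 - t n) * αstar r + t n * δ r with hαn
  have hαn_nn : ∀ n r, 0 ≤ αn n r := fun n r =>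
    add_nonneg (mul_nonneg (by linarith [ht_le1 n]) (hαnn r))
      (mul_nonneg (ht_pos n).le (hδnn r))
  have hαn_sum : ∀ n, ∑ r, αn n r = 1 := by
    intro n
    rw [hαn]
    simp only []
    rw [Finset.sum_add_distrib, ← Finset.mul_sum, ← Finset.mul_sum, hαsum, hδsum]
    ring
  have hpn : ∀ n x, pbar1 f g (αn n) x =
      pbar1 f g αstar x + t n * (pdens1 f g ℓ₀ x - pbar1 f g αstar x) := by
    intro n x
    have h1 : pbar1 f g (αn n) x =
        (1 - t n) * pbar1 f g αstar x + t n * pbar1 f g δ x := by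
      rw [pbar1, pbar1, pbar1]
      rw [show ∑ ℓ, αn n ℓ * pdens1 f g ℓ x =
        ∑ ℓ, ((1 - t n) * (αstar ℓ * pdens1 f g ℓ x) + t n * (δ ℓ * pdens1 f g ℓ x)) from
        Finset.sum_congr rfl fun ℓ _ => by rw [hαn]; ring]
      rw [Finset.sum_add_distrib, ← Finset.mul_sum, ← Finset.mul_sum]
    rw [h1, hpδ x]
    ring
  have hpn_pos : ∀ n x, 0 < pbar1 f g (αn n) x := fun n x =>
    pbar1_pos hf hg (hαn_nn n) (hαn_sum n) x
  -- decomposition of the perturbed KL integrand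
  have hdecomp : ∀ n x, pbar1 f g (αn n) x * Real.log (Rfun f g (αn n) x) =
      pbar1 f g (αn n) x * Real.log (pbar1 f g (αn n) x / pbar1 f g αstar x) +
      ((1 - t n) * (pbar1 f g αstar x * Real.log (Rfun f g αstar x)) +
        t n * (pdens1 f g ℓ₀ x * Real.log (Rfun f g αstar x))) := by
    intro n x
    have hlog : Real.log (Rfun f g (αn n) x) =
        Real.log (pbar1 f g (αn n) x / pbar1 f g αstar x) + Real.log (Rfun f g αstar x) := by
      rw [← pbar1_div hg (αn n) x, ← pbar1_div hg αstar x]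
      have h2 : pbar1 f g (αn n) x / gdens g x =
          (pbar1 f g (αn n) x / pbar1 f g αstar x) * (pbar1 f g αstar x / gdens g x) := by
        rw [div_mul_div_comm, mul_comm (pbar1 f g (αn n) x) (pbar1 f g αstar x),
          mul_div_mul_left _ _ (hppos x).ne']
      rw [h2, Real.log_mul (div_pos (hpn_pos n x) (hppos x)).ne'
        (div_pos (hppos x) (hGpos x)).ne']
    rw [hlog]
    have hpnx := hpn n x
    rw [← pbar1_div hg αstar x] at *
    linear_combination (Real.log (pbar1 f g αstar x / gdens g x)) * hpnx
  -- integrability of the Bregman term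
  have hψ_int : ∀ n, Integrable (fun x : Obs L =>
      pbar1 f g (αn n) x * Real.log (pbar1 f g (αn n) x / pbar1 f g αstar x)) := by
    intro n
    have h0 := hIfin (αn n) (hαn_nn n) (hαn_sum n)
    simp only [pbar1_div hg] at h0
    have heq : (fun x : Obs L =>
        pbar1 f g (αn n) x * Real.log (pbar1 f g (αn n) x / pbar1 f g αstar x)) =
        fun x => pbar1 f g (αn n) x * Real.log (Rfun f g (αn n) x) -
          ((1 - t n) * (pbar1 f g αstar x * Real.log (Rfun f g αstar x)) +
            t n * (pdens1 f g ℓ₀ x * Real.log (Rfun f g αstar x))) :=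
      funext fun x => by linarith [hdecomp n x]
    rw [heq]
    exact h0.sub ((hIint.const_mul _).add (hB.const_mul _))
  -- value of the perturbed KL number
  have hKLn : ∀ n, (∫ x : Obs L, pbar1 f g (αn n) x * Real.log (Rfun f g (αn n) x)) =
      (∫ x : Obs L,
        pbar1 f g (αn n) x * Real.log (pbar1 f g (αn n) x / pbar1 f g αstar x)) +
      ((1 - t n) * Istar + t n * Jq) := by
    intro n
    rw [integral_congr_ae (Filter.Eventually.of_forall (hdecomp n))]
    have hint4 : Integrable (fun x : Obs L =>
        (1 - t n) * (pbar1 f g αstar x * Real.log (Rfun f g αstar x))) volume :=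
      hIint.const_mul _
    have hint5 : Integrable (fun x : Obs L =>
        t n * (pdens1 f g ℓ₀ x * Real.log (Rfun f g αstar x))) volume :=
      hB.const_mul _
    have hint3 : Integrable (fun x : Obs L =>
        (1 - t n) * (pbar1 f g αstar x * Real.log (Rfun f g αstar x)) +
          t n * (pdens1 f g ℓ₀ x * Real.log (Rfun f g αstar x))) volume := hint4.add hint5
    rw [integral_add (hψ_int n) hint3, integral_add hint4 hint5,
      integral_const_mul, integral_const_mul, hIstar, hJq]
  -- the minimality lower bound
  have hLB : ∀ n, t n * (Istar - Jq) ≤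
      ∫ x : Obs L, pbar1 f g (αn n) x * Real.log (pbar1 f g (αn n) x / pbar1 f g αstar x) := by
    intro n
    have h0 := hmin (αn n) (hαn_nn n) (hαn_sum n)
    rw [hKL αstar, hKL (αn n), ← hIstar, hKLn n] at h0
    linarith
  -- the pointwise ratio identity
  have hlogqp : ∀ x : Obs L, Real.log (pdens1 f g ℓ₀ x / pbar1 f g αstar x) =
      Real.log (Rfun f g δ x) - Real.log (Rfun f g αstar x) := by
    intro x
    have hq' : pdens1 f g ℓ₀ x = Rfun f g δ x * gdens g x := by
      rw [← hpδ x]; exact pbar1_eq hg δ x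
    have hp' : pbar1 f g αstar x = Rfun f g αstar x * gdens g x := pbar1_eq hg αstar x
    rw [hq', hp', mul_div_mul_right _ _ (hGpos x).ne',
      Real.log_div (hRδpos x).ne' (hRpos x).ne']
  -- pointwise bounds for the difference quotients
  have hbnd : ∀ n x, 0 ≤ (pbar1 f g (αn n) x *
        Real.log (pbar1 f g (αn n) x / pbar1 f g αstar x)) / t n -
        (pdens1 f g ℓ₀ x - pbar1 f g αstar x) ∧
      (pbar1 f g (αn n) x * Real.log (pbar1 f g (αn n) x / pbar1 f g αstar x)) / t n -
        (pdens1 f g ℓ₀ x - pbar1 f g αstar x) ≤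
      pdens1 f g ℓ₀ x * (Real.log (Rfun f g δ x) - Real.log (Rfun f g αstar x)) -
        (pdens1 f g ℓ₀ x - pbar1 f g αstar x) := by
    intro n x
    have haa := hppos x
    have hb := hqpos x
    have hv := hpn_pos n x
    have htt := ht_pos n
    have htt1 := ht_le1 n
    have hvx := hpn n x
    constructor
    · rw [sub_nonneg, le_div_iff₀ htt]
      have hu := sub_one_le_mul_log (div_pos hv haa)
      have h4 := mul_le_mul_of_nonneg_right hu haa.le
      have h6 : pbar1 f g (αn n) x / pbar1 f g αstar x *
          Real.log (pbar1 f g (αn n) x / pbar1 f g αstar x) * pbar1 f g αstar x =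
          pbar1 f g (αn n) x * Real.log (pbar1 f g (αn n) x / pbar1 f g αstar x) := by
        field_simp
      have h5 : pbar1 f g (αn n) x / pbar1 f g αstar x * pbar1 f g αstar x =
          pbar1 f g (αn n) x := div_mul_cancel₀ _ haa.ne'
      nlinarith [h4, h6, h5, hvx]
    · rw [sub_le_sub_iff_right, div_le_iff₀ htt, ← hlogqp x]
      have hcx := Real.convexOn_mul_log.2 (Set.mem_Ici.mpr (zero_le_one))
        (Set.mem_Ici.mpr (div_pos hb haa).le) (by linarith : (0:ℝ) ≤ 1 - t n) htt.le
        (by ring : (1 - t n) + t n = 1)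
      simp only [smul_eq_mul, mul_one, Real.log_one, mul_zero] at hcx
      simp only [zero_add] at hcx
      have h7 : (1 - t n) + t n * (pdens1 f g ℓ₀ x / pbar1 f g αstar x) =
          pbar1 f g (αn n) x / pbar1 f g αstar x := by
        rw [hvx]; field_simp; ring
      rw [h7] at hcx
      have h8 := mul_le_mul_of_nonneg_right hcx haa.le
      have h6 : pbar1 f g (αn n) x / pbar1 f g αstar x *
          Real.log (pbar1 f g (αn n) x / pbar1 f g αstar x) * pbar1 f g αstar x =
          pbar1 f g (αn n) x * Real.log (pbar1 f g (αn n) x / pbar1 f g αstar x) := by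
        field_simp
      have h9 : t n * (pdens1 f g ℓ₀ x / pbar1 f g αstar x *
          Real.log (pdens1 f g ℓ₀ x / pbar1 f g αstar x)) * pbar1 f g αstar x =
          t n * (pdens1 f g ℓ₀ x * Real.log (pdens1 f g ℓ₀ x / pbar1 f g αstar x)) := by
        field_simp
      nlinarith [h8, h6, h9]
  -- pointwise convergence of the difference quotients
  have hconv : ∀ x : Obs L, Filter.Tendsto (fun n =>
      (pbar1 f g (αn n) x * Real.log (pbar1 f g (αn n) x / pbar1 f g αstar x)) / t n -
        (pdens1 f g ℓ₀ x - pbar1 f g αstar x)) Filter.atTop (nhds 0) := by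
    intro x
    have haa := hppos x
    set aa : ℝ := pbar1 f g αstar x with haadef
    set b : ℝ := pdens1 f g ℓ₀ x with hbdef
    set h : ℝ → ℝ := fun s => (aa + s * (b - aa)) *
      (Real.log (aa + s * (b - aa)) - Real.log aa) with hh
    have hv0 : HasDerivAt (fun s : ℝ => aa + s * (b - aa)) (b - aa) 0 := by
      simpa using ((hasDerivAt_id (0 : ℝ)).mul_const (b - aa)).const_add aa
    have h00 : aa + (0 : ℝ) * (b - aa) ≠ 0 := by simpa using haa.ne'
    have hlog : HasDerivAt (fun s : ℝ => Real.log (aa + s * (b - aa)))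
        ((aa + (0:ℝ) * (b - aa))⁻¹ * (b - aa)) 0 :=
      by have := (Real.hasDerivAt_log h00).comp (0 : ℝ) hv0; exact this
    have hder : HasDerivAt h (b - aa) 0 := by
      have h2 := hv0.mul (hlog.sub_const (Real.log aa))
      have h3 : (b - aa) * (Real.log (aa + (0:ℝ) * (b - aa)) - Real.log aa) +
          (aa + (0:ℝ) * (b - aa)) * ((aa + (0:ℝ) * (b - aa))⁻¹ * (b - aa)) = b - aa := by
        rw [zero_mul, add_zero, sub_self, mul_zero, zero_add, ← mul_assoc,
          mul_inv_cancel₀ haa.ne', one_mul]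
      rw [← h3]
      exact h2
    have hslope := hasDerivAt_iff_tendsto_slope.mp hder
    have htn : Filter.Tendsto t Filter.atTop (nhdsWithin (0:ℝ) {(0:ℝ)}ᶜ) := by
      refine tendsto_nhdsWithin_of_tendsto_nhds_of_eventually_within _ ?_ ?_
      · rw [ht]; exact tendsto_one_div_add_atTop_nhds_zero_nat
      · exact Filter.Eventually.of_forall fun n => (ht_pos n).ne'
    have hcomp := hslope.comp htn
    have hslope_eq : ∀ n, slope h 0 (t n) =
        (pbar1 f g (αn n) x * Real.log (pbar1 f g (αn n) x / pbar1 f g αstar x)) / t n := by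
      intro n
      rw [slope_def_field]
      have hh0 : h 0 = 0 := by simp [hh]
      have hvx : pbar1 f g (αn n) x = aa + t n * (b - aa) := by
        rw [haadef, hbdef]; linarith [hpn n x]
      have hhtn : h (t n) =
          pbar1 f g (αn n) x * Real.log (pbar1 f g (αn n) x / pbar1 f g αstar x) := by
        rw [hh]
        show (aa + t n * (b - aa)) * (Real.log (aa + t n * (b - aa)) - Real.log aa) = _
        rw [← hvx, Real.log_div (hpn_pos n x).ne' haa.ne']
      rw [hh0, hhtn, sub_zero, sub_zero]
    have h5 : Filter.Tendsto (fun n =>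
        (pbar1 f g (αn n) x * Real.log (pbar1 f g (αn n) x / pbar1 f g αstar x)) / t n)
        Filter.atTop (nhds (b - aa)) := by
      refine hcomp.congr fun n => ?_
      exact hslope_eq n
    have h6 := h5.sub_const (b - aa)
    simpa using h6
  -- dominated convergence
  have hM_int : Integrable (fun x : Obs L =>
      pdens1 f g ℓ₀ x * (Real.log (Rfun f g δ x) - Real.log (Rfun f g αstar x)) -
        (pdens1 f g ℓ₀ x - pbar1 f g αstar x)) := by
    have heq : (fun x : Obs L =>
        pdens1 f g ℓ₀ x * (Real.log (Rfun f g δ x) - Real.log (Rfun f g αstar x)) -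
          (pdens1 f g ℓ₀ x - pbar1 f g αstar x)) =
        fun x => (pdens1 f g ℓ₀ x * Real.log (Rfun f g δ x) -
          pdens1 f g ℓ₀ x * Real.log (Rfun f g αstar x)) -
          (pdens1 f g ℓ₀ x - pbar1 f g αstar x) := funext fun x => by ring
    rw [heq]
    exact (hBδ.sub hB).sub ((integrable_pdens1 hf hg ℓ₀).sub (integrable_pbar1 hf hg αstar))
  have hφ_meas : ∀ n, AEStronglyMeasurable (fun x : Obs L =>
      (pbar1 f g (αn n) x * Real.log (pbar1 f g (αn n) x / pbar1 f g αstar x)) / t n -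
        (pdens1 f g ℓ₀ x - pbar1 f g αstar x)) volume := by
    intro n
    refine Measurable.aestronglyMeasurable ?_
    exact ((((measurable_pbar1 hf hg (αn n)).mul (Real.measurable_log.comp
      ((measurable_pbar1 hf hg (αn n)).div hp_meas))).div_const (t n)).sub
      (hq_meas.sub hp_meas))
  have hDCT := MeasureTheory.tendsto_integral_of_dominated_convergence
    (μ := (volume : Measure (Obs L)))
    (F := fun n x => (pbar1 f g (αn n) x *
      Real.log (pbar1 f g (αn n) x / pbar1 f g αstar x)) / t n -
      (pdens1 f g ℓ₀ x - pbar1 f g αstar x))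
    (f := fun _ => (0 : ℝ))
    (fun x : Obs L =>
      pdens1 f g ℓ₀ x * (Real.log (Rfun f g δ x) - Real.log (Rfun f g αstar x)) -
        (pdens1 f g ℓ₀ x - pbar1 f g αstar x))
    hφ_meas hM_int
    (fun n => Filter.Eventually.of_forall fun x => by
      rw [Real.norm_eq_abs, abs_of_nonneg (hbnd n x).1]
      exact (hbnd n x).2)
    (Filter.Eventually.of_forall hconv)
  have hDCT' : Filter.Tendsto (fun n => ∫ x : Obs L,
      ((pbar1 f g (αn n) x * Real.log (pbar1 f g (αn n) x / pbar1 f g αstar x)) / t n -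
        (pdens1 f g ℓ₀ x - pbar1 f g αstar x))) Filter.atTop (nhds 0) := by
    simpa using hDCT
  -- value of the integral of the difference quotient
  have hint_φ : ∀ n, ∫ x : Obs L,
      ((pbar1 f g (αn n) x * Real.log (pbar1 f g (αn n) x / pbar1 f g αstar x)) / t n -
        (pdens1 f g ℓ₀ x - pbar1 f g αstar x)) =
      (∫ x : Obs L, pbar1 f g (αn n) x *
        Real.log (pbar1 f g (αn n) x / pbar1 f g αstar x)) / t n := by
    intro n
    have hint2 : Integrable (fun x : Obs L => pdens1 f g ℓ₀ x - pbar1 f g αstar x) volume :=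
      (integrable_pdens1 hf hg ℓ₀).sub (integrable_pbar1 hf hg αstar)
    rw [integral_sub ((hψ_int n).div_const (t n)) hint2,
      integral_sub (integrable_pdens1 hf hg ℓ₀) (integrable_pbar1 hf hg αstar),
      integral_pdens1 hf hg ℓ₀, integral_pbar1 hf hg αstar, hαsum, integral_div]
    ring
  -- conclusion
  have hev : ∀ n, Istar - Jq ≤ ∫ x : Obs L,
      ((pbar1 f g (αn n) x * Real.log (pbar1 f g (αn n) x / pbar1 f g αstar x)) / t n -
        (pdens1 f g ℓ₀ x - pbar1 f g αstar x)) := by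
    intro n
    rw [hint_φ n, le_div_iff₀ (ht_pos n)]
    have := hLB n
    linarith [hLB n]
  have hfinal : Istar - Jq ≤ 0 :=
    ge_of_tendsto hDCT' (Filter.Eventually.of_forall hev)
  linarith

end Main

/-- Interior minimizer in the single-anomaly case `m = 1`.  Under the
stated finiteness assumptions, the minimizer `α*` of `I_α` over the simplex has all
entries strictly positive: `‖α*‖₀ = |ℰ| = L`. -/
theorem stmt7 {L : ℕ} (hL : 1 ≤ L)
    (f g : Fin L → ℝ → ℝ)
    (hf : ∀ ℓ, IsPosDensity (f ℓ)) (hg : ∀ ℓ, IsPosDensity (g ℓ))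
    (hfg : ∀ ℓ, 0 < volume {t | f ℓ t ≠ g ℓ t})
    (hDfg : ∀ ℓ, Integrable (fun t : ℝ => f ℓ t * Real.log (f ℓ t / g ℓ t)) volume)
    (hDgf : ∀ ℓ, Integrable (fun t : ℝ => g ℓ t * Real.log (g ℓ t / f ℓ t)) volume)
    (habs : ∀ (ℓ : Fin L) (α : Fin L → ℝ), (∀ r, 0 ≤ α r) → ∑ r, α r = 1 →
      ∫⁻ x : Obs L, ENNReal.ofReal
        (pdens1 f g ℓ x * |Real.log (pbar1 f g α x / gdens g x)|) ∂volume < ⊤)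
    (hIfin : ∀ α : Fin L → ℝ, (∀ r, 0 ≤ α r) → ∑ r, α r = 1 →
      Integrable (fun x : Obs L => pbar1 f g α x * Real.log (pbar1 f g α x / gdens g x))
        volume)
    (αstar : Fin L → ℝ) (hαnn : ∀ r, 0 ≤ αstar r) (hαsum : ∑ r, αstar r = 1)
    (hmin : ∀ α : Fin L → ℝ, (∀ r, 0 ≤ α r) → ∑ r, α r = 1 →
      KLnum1 f g αstar ≤ KLnum1 f g α) :
    (∀ ℓ, 0 < αstar ℓ) ∧
      (Finset.univ.filter fun ℓ : Fin L => αstar ℓ ≠ 0).card = L := by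
  have hall : ∀ ℓ, 0 < αstar ℓ :=
    stmt7' hL f g hf hg hfg habs hIfin αstar hαnn hαsum (fun α h1 h2 => hmin α h1 h2)
  refine ⟨hall, ?_⟩
  rw [Finset.filter_true_of_mem fun ℓ _ => (hall ℓ).ne']
  simp [Finset.card_univ]

end MovingAnomaly
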